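/- Let H = ℓ²(ℕ, ℂ) and let R be a bounded linear operator on H of rank exactly two. Let 𝔄(R) = { A : A is a rank-one bounded operator on H and R = A + B for some rank-one bounded operator B }. Then the real linear span of 𝔄(R) has dimension 7 over ℝ; in particular, for any subset of 𝔄(R) its real span has dimension at most 7. -/

import Mathlib

noncomputable section

/-- `H = ℓ²(ℕ, ℂ)`. -/
abbrev H : Type := lp (fun _ : ℕ => ℂ) 2

open Matrix Module Submodule Complex

namespace St13

abbrev M2 := Matrix (Fin 2) (Fin 2) ℂ


lemma rank_one_of_det {N : M2} (h0 : N ≠ 0) (hd : N.det = 0) : N.rank = 1 := by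
  have hle : N.rank ≤ 2 := by simpa using N.rank_le_card_width
  have hne2 : N.rank ≠ 2 := by
    intro h2
    have htop : LinearMap.range N.mulVecLin = ⊤ := by
      apply Submodule.eq_top_of_finrank_eq
      rw [show finrank ℂ (LinearMap.range N.mulVecLin) = N.rank from rfl, h2]
      simp
    have hsurj : Function.Surjective N.mulVec := by
      have := LinearMap.range_eq_top.mp htop
      simpa [Function.Surjective] using this
    have hu : IsUnit N := Matrix.mulVec_surjective_iff_isUnit.mp hsurj
    rw [Matrix.isUnit_iff_isUnit_det N, hd] at hu
    exact hu.ne_zero rfl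
  have hne0 : N.rank ≠ 0 := by
    intro h0'
    have hbot : LinearMap.range N.mulVecLin = ⊥ := Submodule.finrank_eq_zero.mp h0'
    apply h0
    ext i j
    have hm : N.mulVecLin (Pi.single j 1) = 0 := by
      have : N.mulVecLin (Pi.single j 1) ∈ LinearMap.range N.mulVecLin :=
        LinearMap.mem_range_self _ _
      rwa [hbot, Submodule.mem_bot] at this
    have := congrFun hm i
    simpa [Matrix.mulVecLin_apply, Matrix.mulVec_single] using this
  omega

lemma det_eq_zero_of_rank_one {N : M2} (h : N.rank = 1) : N.det = 0 := by
  by_contra hd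
  have hu : IsUnit N := (Matrix.isUnit_iff_isUnit_det N).mpr (isUnit_iff_ne_zero.mpr hd)
  have := Matrix.rank_of_isUnit N hu
  rw [h] at this
  simp at this

lemma det_one_sub (M : M2) : (1 - M).det = 1 - M.trace + M.det := by
  simp [Matrix.det_fin_two, Matrix.trace_fin_two, Matrix.one_apply, Matrix.sub_apply]
  ring




def SS : Set M2 := {N | N.rank = 1 ∧ N.trace = 1}

def TT : M2 →ₗ[ℝ] ℝ :=
  Complex.imLm.comp ((Matrix.traceLinearMap (Fin 2) ℂ ℂ).restrictScalars ℝ)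

lemma TT_apply (M : M2) : TT M = M.trace.im := rfl

lemma mem_SS_of {N : M2} (h0 : N ≠ 0) (hd : N.det = 0) (ht : N.trace = 1) : N ∈ SS :=
  ⟨rank_one_of_det h0 hd, ht⟩

lemma finrank_ker_TT : finrank ℝ (LinearMap.ker TT) = 7 := by
  have h8 : finrank ℝ M2 = 8 := by
    rw [Module.finrank_matrix]
    simp [Complex.finrank_real_complex]
  have hsurj : LinearMap.range TT = ⊤ := by
    rw [LinearMap.range_eq_top]
    intro r
    refine ⟨!![(r : ℂ) * Complex.I, 0; 0, 0], ?_⟩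
    rw [TT_apply]
    simp [Matrix.trace_fin_two_of]
  have := TT.finrank_range_add_finrank_ker
  rw [hsurj, finrank_top, h8] at this
  simp at this
  omega

def vv : Fin 7 → M2 :=
  ![!![1,0;0,0], !![0,1;0,0], !![0,Complex.I;0,0], !![0,0;1,0], !![0,0;Complex.I,0],
    !![1,0;0,-1], !![Complex.I,0;0,-Complex.I]]


lemma vv0 : vv 0 = !![1,0;0,0] := rfl
lemma vv1 : vv 1 = !![0,1;0,0] := rfl
lemma vv2 : vv 2 = !![0,Complex.I;0,0] := rfl
lemma vv3 : vv 3 = !![0,0;1,0] := rfl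
lemma vv4 : vv 4 = !![0,0;Complex.I,0] := rfl
lemma vv5 : vv 5 = !![1,0;0,-1] := rfl
lemma vv6 : vv 6 = !![Complex.I,0;0,-Complex.I] := rfl

lemma vv_indep : LinearIndependent ℝ vv := by
  rw [Fintype.linearIndependent_iff]
  intro g hg
  have h00 := congrFun (congrFun hg 0) 0
  have h01 := congrFun (congrFun hg 0) 1
  have h10 := congrFun (congrFun hg 1) 0
  have h11 := congrFun (congrFun hg 1) 1
  simp [vv0, vv1, vv2, vv3, vv4, vv5, vv6, Fin.sum_univ_seven, Complex.real_smul, Complex.ext_iff] at h00 h01 h10 h11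
  intro i
  fin_cases i <;> simp <;> linarith [h00.1, h00.2, h01.1, h01.2, h10.1, h10.2, h11.1, h11.2]

lemma vv_mem_span : ∀ k, vv k ∈ span ℝ SS := by
  have hP : (!![1,0;0,0] : M2) ∈ SS := by
    refine mem_SS_of ?_ ?_ ?_
    · intro h; simpa using congrFun (congrFun h 0) 0
    · simp [Matrix.det_fin_two_of]
    · simp [Matrix.trace_fin_two_of]
  have hQ : (!![1,1;0,0] : M2) ∈ SS := by
    refine mem_SS_of ?_ ?_ ?_
    · intro h; simpa using congrFun (congrFun h 0) 0
    · simp [Matrix.det_fin_two_of]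
    · simp [Matrix.trace_fin_two_of]
  have hQi : (!![1,Complex.I;0,0] : M2) ∈ SS := by
    refine mem_SS_of ?_ ?_ ?_
    · intro h; simpa using congrFun (congrFun h 0) 0
    · simp [Matrix.det_fin_two_of]
    · simp [Matrix.trace_fin_two_of]
  have hQ' : (!![1,0;1,0] : M2) ∈ SS := by
    refine mem_SS_of ?_ ?_ ?_
    · intro h; simpa using congrFun (congrFun h 0) 0
    · simp [Matrix.det_fin_two_of]
    · simp [Matrix.trace_fin_two_of]
  have hQi' : (!![1,0;Complex.I,0] : M2) ∈ SS := by
    refine mem_SS_of ?_ ?_ ?_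
    · intro h; simpa using congrFun (congrFun h 0) 0
    · simp [Matrix.det_fin_two_of]
    · simp [Matrix.trace_fin_two_of]
  have hP' : (!![0,0;0,1] : M2) ∈ SS := by
    refine mem_SS_of ?_ ?_ ?_
    · intro h; simpa using congrFun (congrFun h 1) 1
    · simp [Matrix.det_fin_two_of]
    · simp [Matrix.trace_fin_two_of]
  have hM1 : (!![(1+Complex.I)/2, 1; 1/2, (1-Complex.I)/2] : M2) ∈ SS := by
    refine mem_SS_of ?_ ?_ ?_
    · intro h; simpa using congrFun (congrFun h 0) 1
    · simp only [Matrix.det_fin_two_of]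
      linear_combination (-1/4 : ℂ) * Complex.I_sq
    · simp [Matrix.trace_fin_two_of]; ring
  have hM2 : (!![(1-Complex.I)/2, 1; 1/2, (1+Complex.I)/2] : M2) ∈ SS := by
    refine mem_SS_of ?_ ?_ ?_
    · intro h; simpa using congrFun (congrFun h 0) 1
    · simp only [Matrix.det_fin_two_of]
      linear_combination (-1/4 : ℂ) * Complex.I_sq
    · simp [Matrix.trace_fin_two_of]; ring
  intro k
  fin_cases k
  · exact subset_span hP
  · have : vv 1 = !![1,1;0,0] - !![1,0;0,0] := by
      rw [vv1]; ext i j; fin_cases i <;> fin_cases j <;> simp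
    rw [show (⟨1, by omega⟩ : Fin 7) = 1 from rfl, this]
    exact sub_mem (subset_span hQ) (subset_span hP)
  · have : vv 2 = !![1,Complex.I;0,0] - !![1,0;0,0] := by
      rw [vv2]; ext i j; fin_cases i <;> fin_cases j <;> simp
    rw [show (⟨2, by omega⟩ : Fin 7) = 2 from rfl, this]
    exact sub_mem (subset_span hQi) (subset_span hP)
  · have : vv 3 = !![1,0;1,0] - !![1,0;0,0] := by
      rw [vv3]; ext i j; fin_cases i <;> fin_cases j <;> simp
    rw [show (⟨3, by omega⟩ : Fin 7) = 3 from rfl, this]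
    exact sub_mem (subset_span hQ') (subset_span hP)
  · have : vv 4 = !![1,0;Complex.I,0] - !![1,0;0,0] := by
      rw [vv4]; ext i j; fin_cases i <;> fin_cases j <;> simp
    rw [show (⟨4, by omega⟩ : Fin 7) = 4 from rfl, this]
    exact sub_mem (subset_span hQi') (subset_span hP)
  · have : vv 5 = !![1,0;0,0] - !![0,0;0,1] := by
      rw [vv5]; ext i j; fin_cases i <;> fin_cases j <;> simp
    rw [show (⟨5, by omega⟩ : Fin 7) = 5 from rfl, this]
    exact sub_mem (subset_span hP) (subset_span hP')
  · have : vv 6 = !![(1+Complex.I)/2, 1; 1/2, (1-Complex.I)/2]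
        - !![(1-Complex.I)/2, 1; 1/2, (1+Complex.I)/2] := by
      rw [vv6]; ext i j; fin_cases i <;> fin_cases j <;> simp <;> ring
    rw [show (⟨6, by omega⟩ : Fin 7) = 6 from rfl, this]
    exact sub_mem (subset_span hM1) (subset_span hM2)

lemma finrank_span_SS : finrank ℝ (span ℝ SS) = 7 := by
  have hle : span ℝ SS ≤ LinearMap.ker TT := by
    rw [span_le]
    rintro N ⟨-, ht⟩
    simp [LinearMap.mem_ker, TT_apply, ht]
  have hfd : FiniteDimensional ℝ M2 := by infer_instance
  have h1 : finrank ℝ (span ℝ SS) ≤ 7 := by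
    rw [← finrank_ker_TT]
    exact Submodule.finrank_mono hle
  have h2 : 7 ≤ finrank ℝ (span ℝ SS) := by
    have hsub : span ℝ (Set.range vv) ≤ span ℝ SS := by
      rw [span_le]
      rintro - ⟨k, rfl⟩
      exact vv_mem_span k
    have := finrank_span_eq_card vv_indep
    simp at this
    rw [← this]
    exact Submodule.finrank_mono hsub
  omega

end St13

open St13

set_option maxHeartbeats 1000000 in
set_option synthInstance.maxHeartbeats 200000 in
/-- If `R` is a bounded operator on `ℓ²(ℕ, ℂ)` of rank exactly two, then
the real linear span of `𝔄(R) = {A rank one : R = A + B for some rank-one B}` has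
dimension `7` over `ℝ` (so any subset of `𝔄(R)` spans real dimension at most `7`). -/
theorem statement13 (R : H →L[ℂ] H) (hR : LinearMap.rank (R : H →ₗ[ℂ] H) = 2) :
    Module.finrank ℝ
      ↥(Submodule.span ℝ
        {A : H →L[ℂ] H | LinearMap.rank (A : H →ₗ[ℂ] H) = 1 ∧
          ∃ B : H →L[ℂ] H, LinearMap.rank (B : H →ₗ[ℂ] H) = 1 ∧ R = A + B}) = 7 := by
  classical
  haveI hfree : ∀ (p : Submodule ℂ H), Module.Free ℂ ↥p := fun p => Module.Free.of_divisionRing ℂ ↥p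
  set 𝔄 : Set (H →L[ℂ] H) := {A : H →L[ℂ] H | LinearMap.rank (A : H →ₗ[ℂ] H) = 1 ∧
          ∃ B : H →L[ℂ] H, LinearMap.rank (B : H →ₗ[ℂ] H) = 1 ∧ R = A + B} with h𝔄def
  set W : Submodule ℂ H := LinearMap.range (R : H →ₗ[ℂ] H) with hWdef
  have hrank2 : Module.rank ℂ W = 2 := hR
  haveI hWfin : Module.Finite ℂ W := by
    apply Module.rank_lt_aleph0_iff.mp
    rw [hrank2]
    exact_mod_cast Cardinal.nat_lt_aleph0 2
  have hfr2 : finrank ℂ W = 2 := (Module.rank_eq_ofNat_iff_finrank_eq_ofNat 2).mp hrank2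
  let w : Basis (Fin 2) ℂ W := Module.finBasisOfFinrankEq ℂ W hfr2
  have hx : ∀ j : Fin 2, ∃ x : H, (R : H →ₗ[ℂ] H) x = (w j : H) := fun j => (w j).2
  choose x hxw using hx
  have hφex : ∀ i : Fin 2, ∃ φ : H →ₗ[ℂ] ℂ, φ.comp W.subtype = w.coord i :=
    fun i => LinearMap.exists_extend _
  choose φ hφ using hφex
  have hφ_apply : ∀ (i : Fin 2) (u : W), φ i (u : H) = w.coord i u :=
    fun i u => LinearMap.congr_fun (hφ i) u
  -- the coordinate map
  let Ψ : (H →L[ℂ] H) →ₗ[ℂ] M2 :=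
    { toFun := fun A => Matrix.of fun i j => φ i (A (x j))
      map_add' := fun A B => by ext i j : 2; simp
      map_smul' := fun c A => by ext i j : 2; simp }
  have hΨ_apply : ∀ (A : H →L[ℂ] H) (i j : Fin 2), Ψ A i j = φ i (A (x j)) := fun A i j => rfl
  have hΨR : Ψ R = 1 := by
    ext i j : 2
    rw [hΨ_apply]
    have hco : R (x j) = ((w j : W) : H) := hxw j
    rw [hco, hφ_apply]
    rcases eq_or_ne i j with h | h
    · subst h; simp [Matrix.one_apply, Basis.coord_apply, Basis.repr_self]
    · simp [Matrix.one_apply, h, Basis.coord_apply, Basis.repr_self,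
        Finsupp.single_eq_of_ne (Ne.symm h)]
  -- the key property
  set P : (H →L[ℂ] H) → Prop :=
    fun A => (∀ u, A u ∈ W) ∧ (∀ u, u ∈ LinearMap.ker (R : H →ₗ[ℂ] H) → A u = 0) with hPdef
  have hdec : ∀ z : H, ∃ c : Fin 2 → ℂ,
      z - ∑ j, c j • x j ∈ LinearMap.ker (R : H →ₗ[ℂ] H) := by
    intro z
    have hz : (R : H →ₗ[ℂ] H) z ∈ W := ⟨z, rfl⟩
    refine ⟨fun j => w.coord j ⟨(R : H →ₗ[ℂ] H) z, hz⟩, ?_⟩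
    set u : W := ⟨(R : H →ₗ[ℂ] H) z, hz⟩ with hu
    have hsum : (R : H →ₗ[ℂ] H) (∑ j, w.coord j u • x j) = (u : H) := by
      rw [map_sum]
      have h1 : ∀ j, (R : H →ₗ[ℂ] H) (w.coord j u • x j) = w.coord j u • ((w j : W) : H) := by
        intro j; rw [_root_.map_smul, hxw j]
      rw [Finset.sum_congr rfl fun j _ => h1 j]
      calc ∑ j, w.coord j u • ((w j : W) : H)
          = ((∑ j, w.coord j u • w j : W) : H) := by push_cast; rfl
        _ = (u : H) := by
            congr 1
            simp only [Basis.coord_apply]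
            exact w.sum_repr u
    rw [LinearMap.mem_ker, map_sub, hsum]
    exact sub_self _
  have hAz : ∀ A : H →L[ℂ] H, (∀ u, u ∈ LinearMap.ker (R : H →ₗ[ℂ] H) → A u = 0) →
      ∀ z : H, ∃ c : Fin 2 → ℂ, A z = ∑ j, c j • A (x j) := by
    intro A hker z
    obtain ⟨c, hc⟩ := hdec z
    refine ⟨c, ?_⟩
    have h1 : A (z - ∑ j, c j • x j) = 0 := hker _ hc
    rw [map_sub, map_sum, sub_eq_zero] at h1
    rw [h1]
    exact Finset.sum_congr rfl fun j _ => by rw [_root_.map_smul]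
  -- injectivity on P
  have hA0 : ∀ A : H →L[ℂ] H, P A → Ψ A = 0 → A = 0 := by
    intro A hPA h0
    have hAx : ∀ j, A (x j) = 0 := by
      intro j
      set u : W := ⟨A (x j), hPA.1 (x j)⟩ with hudef
      have hco : ∀ i, w.coord i u = 0 := by
        intro i
        rw [← hφ_apply i u]
        have : Ψ A i j = 0 := by rw [h0]; rfl
        rw [← this, hΨ_apply]
      have hu0 : u = 0 := by
        have hr : w.repr u = 0 := by
          ext i
          simpa [Basis.coord_apply] using hco i
        exact (LinearEquiv.map_eq_zero_iff w.repr).mp hr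
      have := congrArg (fun (v : W) => (v : H)) hu0
      simpa [hudef] using this
    ext z
    obtain ⟨c, hc⟩ := hAz A hPA.2 z
    simp [hc, hAx]
  -- rank correspondence
  let g : (Fin 2 → ℂ) →ₗ[ℂ] H := Fintype.linearCombination ℂ (fun i => ((w i : H)))
  have hg_apply : ∀ c : Fin 2 → ℂ, g c = ∑ i, c i • ((w i : H)) :=
    fun c => Fintype.linearCombination_apply ℂ _ c
  have hgind : LinearIndependent ℂ (fun i => ((w i : H))) :=
    w.linearIndependent.map' W.subtype (Submodule.ker_subtype W)
  have hginj : Function.Injective g := by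
    rw [← LinearMap.ker_eq_bot, eq_bot_iff]
    intro c hc
    have hc0 : ∀ i, c i = 0 :=
      Fintype.linearIndependent_iff.mp hgind c (by
        have := hc
        rwa [LinearMap.mem_ker, hg_apply] at this)
    rw [Submodule.mem_bot]
    funext i
    exact hc0 i
  have hrank_eq : ∀ A : H →L[ℂ] H, P A →
      LinearMap.rank (A : H →ₗ[ℂ] H) = ((Ψ A).rank : Cardinal) := by
    intro A hPA
    have hgA : ∀ j, g ((Ψ A)ᵀ j) = A (x j) := by
      intro j
      rw [hg_apply]
      set u : W := ⟨A (x j), hPA.1 (x j)⟩ with hudef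
      have hent : ∀ i, (Ψ A)ᵀ j i = w.coord i u := by
        intro i
        rw [Matrix.transpose_apply, hΨ_apply]
        exact (hφ_apply i u).symm ▸ rfl
      rw [Finset.sum_congr rfl fun i _ => by rw [hent i]]
      calc ∑ i, w.coord i u • ((w i : W) : H)
          = ((∑ i, w.coord i u • w i : W) : H) := by push_cast; rfl
        _ = (u : H) := by
            congr 1
            simp only [Basis.coord_apply]
            exact w.sum_repr u
        _ = A (x j) := rfl
    have hrangeA : LinearMap.range (A : H →ₗ[ℂ] H)
        = Submodule.map g (LinearMap.range (Ψ A).mulVecLin) := by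
      rw [Matrix.range_mulVecLin, Submodule.map_span, ← Set.range_comp]
      have hcomp : (⇑g ∘ (Ψ A).col) = fun j => A (x j) := funext fun j => hgA j
      rw [hcomp]
      apply le_antisymm
      · rintro - ⟨z, rfl⟩
        show A z ∈ _
        obtain ⟨c, hc⟩ := hAz A hPA.2 z
        rw [hc]
        exact Submodule.sum_mem _ fun j _ =>
          Submodule.smul_mem _ _ (Submodule.subset_span ⟨j, rfl⟩)
      · rw [Submodule.span_le]
        rintro - ⟨j, rfl⟩
        exact ⟨x j, rfl⟩
    have e1 : LinearMap.rank (A : H →ₗ[ℂ] H)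
        = Module.rank ℂ ↥(Submodule.map g (LinearMap.range (Ψ A).mulVecLin)) := by
      rw [show LinearMap.rank (A : H →ₗ[ℂ] H)
        = Module.rank ℂ ↥(LinearMap.range (A : H →ₗ[ℂ] H)) from rfl, hrangeA]
    rw [e1, ← (Submodule.equivMapOfInjective g hginj (LinearMap.range (Ψ A).mulVecLin)).rank_eq]
    rw [← Module.finrank_eq_rank]
    rfl
  -- forward: members of 𝔄 satisfy P
  have hP𝔄 : ∀ A ∈ 𝔄, P A := by
    rintro A ⟨hA1, B, hB1, hAB⟩
    haveI hfA : Module.Finite ℂ ↥(LinearMap.range (A : H →ₗ[ℂ] H)) := by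
      exact Module.rank_lt_aleph0_iff.mp (lt_of_eq_of_lt hA1 Cardinal.one_lt_aleph0)
    haveI hfB : Module.Finite ℂ ↥(LinearMap.range (B : H →ₗ[ℂ] H)) := by
      exact Module.rank_lt_aleph0_iff.mp (lt_of_eq_of_lt hB1 Cardinal.one_lt_aleph0)
    have hfa : finrank ℂ ↥(LinearMap.range (A : H →ₗ[ℂ] H)) = 1 :=
      Module.rank_eq_one_iff_finrank_eq_one.mp hA1
    have hfb : finrank ℂ ↥(LinearMap.range (B : H →ₗ[ℂ] H)) = 1 :=
      Module.rank_eq_one_iff_finrank_eq_one.mp hB1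
    have hle : W ≤ LinearMap.range (A : H →ₗ[ℂ] H) ⊔ LinearMap.range (B : H →ₗ[ℂ] H) := by
      rintro - ⟨z, rfl⟩
      have hz : (R : H →ₗ[ℂ] H) z = (A : H →ₗ[ℂ] H) z + (B : H →ₗ[ℂ] H) z := by
        simp [hAB]
      rw [hz]
      exact Submodule.add_mem _ (Submodule.mem_sup_left ⟨z, rfl⟩)
        (Submodule.mem_sup_right ⟨z, rfl⟩)
    have hsupinf := Submodule.finrank_sup_add_finrank_inf_eq
      (LinearMap.range (A : H →ₗ[ℂ] H)) (LinearMap.range (B : H →ₗ[ℂ] H))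
    rw [hfa, hfb] at hsupinf
    have hW_eq : W = LinearMap.range (A : H →ₗ[ℂ] H) ⊔ LinearMap.range (B : H →ₗ[ℂ] H) := by
      apply Submodule.eq_of_le_of_finrank_le hle
      rw [hfr2]; omega
    have h2' : finrank ℂ ↥(LinearMap.range (A : H →ₗ[ℂ] H) ⊔ LinearMap.range (B : H →ₗ[ℂ] H))
        = 2 := by rw [← hW_eq]; exact hfr2
    haveI : Module.Finite ℂ
        ↥(LinearMap.range (A : H →ₗ[ℂ] H) ⊓ LinearMap.range (B : H →ₗ[ℂ] H)) :=
      Submodule.finiteDimensional_of_le inf_le_left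
    have hinf : LinearMap.range (A : H →ₗ[ℂ] H) ⊓ LinearMap.range (B : H →ₗ[ℂ] H) = ⊥ := by
      apply Submodule.finrank_eq_zero.mp
      omega
    constructor
    · intro u
      rw [hWdef] at hW_eq ⊢
      rw [hW_eq]
      exact Submodule.mem_sup_left ⟨u, rfl⟩
    · intro u hu
      have h0 : (A : H →ₗ[ℂ] H) u + (B : H →ₗ[ℂ] H) u = 0 := by
        have : (R : H →ₗ[ℂ] H) u = 0 := hu
        rw [hAB] at this
        simpa using this
      have hmem : (A : H →ₗ[ℂ] H) u ∈
          LinearMap.range (A : H →ₗ[ℂ] H) ⊓ LinearMap.range (B : H →ₗ[ℂ] H) := by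
        refine ⟨⟨u, rfl⟩, ?_⟩
        rw [eq_neg_of_add_eq_zero_left h0]
        exact Submodule.neg_mem _ ⟨u, rfl⟩
      rw [hinf, Submodule.mem_bot] at hmem
      simpa using hmem
  -- backward: construction
  let Rc : H →L[ℂ] W := R.codRestrict W (fun z => ⟨z, rfl⟩)
  let ψ : Fin 2 → (H →L[ℂ] ℂ) := fun j => (LinearMap.toContinuousLinearMap (w.coord j)).comp Rc
  have hψx : ∀ j k, ψ j (x k) = if k = j then 1 else 0 := by
    intro j k
    show w.coord j (Rc (x k)) = _
    have hrc : Rc (x k) = w k := Subtype.ext (hxw k)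
    rw [hrc]
    rcases eq_or_ne k j with h | h
    · subst h; simp [Basis.coord_apply, Basis.repr_self]
    · simp [Basis.coord_apply, Basis.repr_self, h, Finsupp.single_eq_of_ne (Ne.symm h)]
  have hψker : ∀ j u, u ∈ LinearMap.ker (R : H →ₗ[ℂ] H) → ψ j u = 0 := by
    intro j u hu
    show w.coord j (Rc u) = 0
    have : Rc u = 0 := Subtype.ext hu
    rw [this, map_zero]
  let AM : M2 → (H →L[ℂ] H) := fun M => ∑ i, ∑ j, M i j • ((ψ j).smulRight ((w i : H)))
  have hAM_apply : ∀ M z, AM M z = ∑ i, ∑ j, M i j • (ψ j z • ((w i : W) : H)) := by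
    intro M z
    simp [AM, ContinuousLinearMap.sum_apply, ContinuousLinearMap.smul_apply,
      ContinuousLinearMap.smulRight_apply]
  have hAMP : ∀ M, P (AM M) := by
    intro M
    constructor
    · intro u
      rw [hAM_apply]
      exact Submodule.sum_mem _ fun i _ => Submodule.sum_mem _ fun j _ =>
        Submodule.smul_mem _ _ (Submodule.smul_mem _ _ (w i).2)
    · intro u hu
      rw [hAM_apply]
      simp [hψker _ _ hu]
  have hΨAM : ∀ M, Ψ (AM M) = M := by
    intro M
    ext i' j' : 2
    rw [hΨ_apply, hAM_apply]
    rw [map_sum]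
    have hterm : ∀ i, φ i' (∑ j, M i j • (ψ j (x j') • ((w i : W) : H)))
        = M i j' • (w.coord i' (w i)) := by
      intro i
      rw [map_sum]
      have : ∀ j, φ i' (M i j • (ψ j (x j') • ((w i : W) : H)))
          = (M i j * (if j' = j then 1 else 0)) • w.coord i' (w i) := by
        intro j
        rw [_root_.map_smul, _root_.map_smul, hφ_apply, hψx]
        rcases eq_or_ne j' j with h | h
        · subst h; simp
        · simp [h, Ne.symm h]
      rw [Finset.sum_congr rfl fun j _ => this j]
      rw [← Finset.sum_smul]
      congr 1
      simp
    rw [Finset.sum_congr rfl fun i _ => hterm i]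
    have hcoord : ∀ i, w.coord i' (w i) = if i = i' then 1 else 0 := by
      intro i
      rcases eq_or_ne i i' with h | h
      · subst h; simp [Basis.coord_apply, Basis.repr_self]
      · simp [Basis.coord_apply, Basis.repr_self, h, Finsupp.single_eq_of_ne h]
    rw [Finset.sum_congr rfl fun i _ => by rw [hcoord i]]
    simp
  -- image of 𝔄 under Ψ is SS
  have himg : (⇑Ψ) '' 𝔄 = SS := by
    apply Set.ext
    intro M
    constructor
    · rintro ⟨A, hA𝔄, rfl⟩
      obtain ⟨hA1, B, hB1, hAB⟩ := hA𝔄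
      have hPA : P A := hP𝔄 A ⟨hA1, B, hB1, hAB⟩
      have hPB : P B := hP𝔄 B ⟨hB1, A, hA1, by rw [hAB, add_comm]⟩
      have hra := hrank_eq A hPA
      have hrb := hrank_eq B hPB
      rw [hA1] at hra
      rw [hB1] at hrb
      have hArank : (Ψ A).rank = 1 := by exact_mod_cast hra.symm
      have hBrank : (Ψ B).rank = 1 := by exact_mod_cast hrb.symm
      refine ⟨hArank, ?_⟩
      have hsum : Ψ A + Ψ B = 1 := by rw [← map_add, ← hAB, hΨR]
      have hBdet : (Ψ B).det = 0 := det_eq_zero_of_rank_one hBrank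
      have hAdet : (Ψ A).det = 0 := det_eq_zero_of_rank_one hArank
      have h1 : Ψ B = 1 - Ψ A := eq_sub_of_add_eq' hsum
      rw [h1, det_one_sub, hAdet] at hBdet
      linear_combination -hBdet
    · rintro ⟨hM1, hMtr⟩
      have hPB : P (R - AM M) := by
        constructor
        · intro u
          have hsub : (R - AM M) u = R u - AM M u := rfl
          rw [hsub]
          exact Submodule.sub_mem _ ⟨u, rfl⟩ ((hAMP M).1 u)
        · intro u hu
          have hsub : (R - AM M) u = R u - AM M u := rfl
          have hRu : R u = 0 := hu
          rw [hsub, (hAMP M).2 u hu, hRu, sub_zero]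
      refine ⟨AM M, ⟨?_, R - AM M, ?_, (add_sub_cancel _ _).symm⟩, hΨAM M⟩
      · rw [hrank_eq _ (hAMP M), hΨAM M, hM1]
        norm_cast
      · rw [hrank_eq _ hPB]
        have hΨB : Ψ (R - AM M) = 1 - M := by rw [map_sub, hΨR, hΨAM]
        rw [hΨB]
        have hdet : (1 - M : M2).det = 0 := by
          rw [det_one_sub, hMtr, det_eq_zero_of_rank_one hM1]; ring
        have hne : (1 - M : M2) ≠ 0 := by
          intro h
          have hM : M = 1 := by
            have := sub_eq_zero.mp h
            exact this.symm
          rw [hM] at hM1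
          simp [Matrix.rank_one] at hM1
        rw [rank_one_of_det hne hdet]
        norm_cast
  -- P holds on the span
  have hspanP : ∀ C ∈ Submodule.span ℝ 𝔄, P C := by
    intro C hC
    refine Submodule.span_induction (fun A hA => hP𝔄 A hA) ?_ ?_ ?_ hC
    · exact ⟨fun u => by simpa using W.zero_mem, fun u _ => rfl⟩
    · rintro A B _ _ ⟨hA1, hA2⟩ ⟨hB1, hB2⟩
      exact ⟨fun u => by
          rw [show (A + B) u = A u + B u from rfl]
          exact Submodule.add_mem _ (hA1 u) (hB1 u),
        fun u hu => by
          rw [show (A + B) u = A u + B u from rfl, hA2 u hu, hB2 u hu, add_zero]⟩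
    · rintro r A _ ⟨h1, h2⟩
      exact ⟨fun u => by
          rw [show (r • A) u = r • A u from rfl]
          exact Submodule.smul_of_tower_mem _ r (h1 u),
        fun u hu => by
          rw [show (r • A) u = r • A u from rfl, h2 u hu, smul_zero]⟩
  -- conclude
  let Ψr : (H →L[ℂ] H) →ₗ[ℝ] M2 := Ψ.restrictScalars ℝ
  let e := Ψr.domRestrict (Submodule.span ℝ 𝔄)
  have he_inj : Function.Injective e := by
    rw [← LinearMap.ker_eq_bot, eq_bot_iff]
    rintro ⟨C, hC⟩ h0
    have hΨC : Ψ C = 0 := h0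
    have hC0 : C = 0 := hA0 C (hspanP C hC) hΨC
    rw [Submodule.mem_bot]
    exact Subtype.ext hC0
  have h1 := LinearMap.finrank_range_of_inj he_inj
  have h2 : LinearMap.range e = Submodule.span ℝ SS := by
    have himg' : (⇑Ψr '' 𝔄) = SS := himg
    rw [LinearMap.range_domRestrict, Submodule.map_span, himg']
  rw [← h1, h2]
  exact finrank_span_SS

end
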